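/- Let Ω be a neighborhood of the origin in ℂ and Φ : Ω → ℝ a function with Φ(w) ≥ 0 for all w ∈ Ω. Suppose there is a positive integer n and complex constants c₀, c₁, …, cₙ such that Φ(w) = Σ_{p=0}^{n} c_p · w^p · conj(w)^{n−p} + O(|w|^{n+1}) as |w| → 0. If n is odd, then c_p = 0 for all p ∈ {0, 1, …, n}. -/

import Mathlib

/-- If `Φ ≥ 0` near `0 ∈ ℂ` and `Φ(w) = ∑_{p=0}^{n} c_p w^p conj(w)^{n-p} + O(|w|^{n+1})`
with `n` odd, then all coefficients `c_p` vanish. -/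
theorem stmt0 (Ω : Set ℂ) (hΩ : Ω ∈ nhds (0 : ℂ)) (Φ : ℂ → ℝ)
    (hΦ : ∀ w ∈ Ω, 0 ≤ Φ w) (n : ℕ) (hn : 0 < n) (hodd : Odd n)
    (c : ℕ → ℂ)
    (hexp : ∃ C > (0 : ℝ), ∃ r > (0 : ℝ), ∀ w : ℂ, ‖w‖ < r →
      ‖(Φ w : ℂ) - ∑ p ∈ Finset.range (n + 1),
          c p * w ^ p * (starRingEnd ℂ w) ^ (n - p)‖ ≤ C * ‖w‖ ^ (n + 1)) :
    ∀ p ≤ n, c p = 0 := by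
  classical
  obtain ⟨C, hC, r, hr, hb⟩ := hexp
  obtain ⟨δ, hδ, hball⟩ := Metric.mem_nhds_iff.mp hΩ
  set P : ℂ → ℂ := fun w => ∑ p ∈ Finset.range (n + 1),
      c p * w ^ p * (starRingEnd ℂ w) ^ (n - p) with hPdef
  -- homogeneity under real scaling
  have hhom : ∀ (t : ℝ) (z : ℂ), P ((t : ℂ) * z) = (t : ℂ) ^ n * P z := by
    intro t z
    simp only [hPdef, Finset.mul_sum]
    refine Finset.sum_congr rfl fun p hp => ?_
    have hpn : p ≤ n := Nat.lt_succ_iff.mp (Finset.mem_range.mp hp)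
    have hc : (starRingEnd ℂ) ((t : ℂ) * z) = (t : ℂ) * (starRingEnd ℂ) z := by
      simp [Complex.conj_ofReal]
    rw [hc, mul_pow, mul_pow]
    have ht : (t : ℂ) ^ p * (t : ℂ) ^ (n - p) = (t : ℂ) ^ n := by
      rw [← pow_add, Nat.add_sub_cancel' hpn]
    calc c p * ((t:ℂ)^p * z^p) * ((t:ℂ)^(n-p) * (starRingEnd ℂ z)^(n-p))
        = ((t:ℂ)^p * (t:ℂ)^(n-p)) * (c p * z^p * (starRingEnd ℂ z)^(n-p)) := by ring
      _ = (t:ℂ)^n * (c p * z^p * (starRingEnd ℂ z)^(n-p)) := by rw [ht]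
  -- antisymmetry
  have hneg : ∀ z : ℂ, P (-z) = -P z := by
    intro z
    have h1 := hhom (-1) z
    simp only [Complex.ofReal_neg, Complex.ofReal_one, neg_one_mul] at h1
    rw [h1, hodd.neg_one_pow, neg_one_mul]
  -- bound on P near 0
  set r0 : ℝ := min r δ with hr0def
  have hr0 : 0 < r0 := lt_min hr hδ
  have hPbd : ∀ w : ℂ, ‖w‖ < r0 → ‖P w‖ ≤ 3 * C * ‖w‖ ^ (n + 1) := by
    intro w hw
    have hwr : ‖w‖ < r := lt_of_lt_of_le hw (min_le_left _ _)
    have hwδ : ‖w‖ < δ := lt_of_lt_of_le hw (min_le_right _ _)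
    have hwΩ : w ∈ Ω := hball (by simpa [Metric.mem_ball] using hwδ)
    have hwΩ' : -w ∈ Ω := hball (by simpa [Metric.mem_ball] using hwδ)
    have h1 := hb w hwr
    have h2 := hb (-w) (by simpa using hwr)
    rw [show (∑ p ∈ Finset.range (n + 1),
        c p * (-w) ^ p * (starRingEnd ℂ (-w)) ^ (n - p)) = P (-w) from rfl, hneg,
      sub_neg_eq_add, norm_neg] at h2
    have hsum : Φ w + Φ (-w) ≤ 2 * C * ‖w‖ ^ (n + 1) := by
      have h3 : ‖((Φ w : ℂ) - P w) + ((Φ (-w) : ℂ) + P w)‖ ≤ 2 * C * ‖w‖ ^ (n + 1) := by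
        calc ‖((Φ w : ℂ) - P w) + ((Φ (-w) : ℂ) + P w)‖
            ≤ ‖(Φ w : ℂ) - P w‖ + ‖(Φ (-w) : ℂ) + P w‖ := norm_add_le _ _
          _ ≤ C * ‖w‖ ^ (n + 1) + C * ‖w‖ ^ (n + 1) := add_le_add h1 h2
          _ = 2 * C * ‖w‖ ^ (n + 1) := by ring
      have he : ((Φ w : ℂ) - P w) + ((Φ (-w) : ℂ) + P w) = ((Φ w + Φ (-w) : ℝ) : ℂ) := by
        push_cast; ring
      rw [he, Complex.norm_real] at h3
      exact le_trans (le_abs_self _) h3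
    have hΦw : Φ w ≤ 2 * C * ‖w‖ ^ (n + 1) :=
      le_trans (by linarith [hΦ (-w) hwΩ']) hsum
    have hΦw0 : 0 ≤ Φ w := hΦ w hwΩ
    calc ‖P w‖ = ‖(Φ w : ℂ) - ((Φ w : ℂ) - P w)‖ := by ring_nf
      _ ≤ ‖(Φ w : ℂ)‖ + ‖(Φ w : ℂ) - P w‖ := norm_sub_le _ _
      _ ≤ 2 * C * ‖w‖ ^ (n + 1) + C * ‖w‖ ^ (n + 1) := by
          refine add_le_add ?_ h1
          rw [Complex.norm_real, Real.norm_eq_abs, abs_of_nonneg hΦw0]; exact hΦw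
      _ = 3 * C * ‖w‖ ^ (n + 1) := by ring
  -- P vanishes identically
  have hPzero : ∀ z : ℂ, P z = 0 := by
    intro z
    rcases eq_or_ne z 0 with hz | hz
    · subst hz
      simp only [hPdef, map_zero]
      refine Finset.sum_eq_zero fun p hp => ?_
      rcases Nat.eq_zero_or_pos p with hp0 | hp0
      · subst hp0
        simp [zero_pow hn.ne']
      · simp [zero_pow hp0.ne']
    · have hz0 : 0 < ‖z‖ := norm_pos_iff.mpr hz
      have key : ∀ t : ℝ, 0 < t → t < r0 / ‖z‖ → ‖P z‖ ≤ 3 * C * t * ‖z‖ ^ (n + 1) := by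
        intro t ht htr
        have hnorm : ‖(t : ℂ) * z‖ = t * ‖z‖ := by
          rw [norm_mul, Complex.norm_real, Real.norm_eq_abs, abs_of_pos ht]
        have htz : ‖(t : ℂ) * z‖ < r0 := by
          rw [hnorm]; exact (lt_div_iff₀ hz0).mp htr
        have hB := hPbd ((t : ℂ) * z) htz
        rw [hhom t z, norm_mul, norm_pow, Complex.norm_real, Real.norm_eq_abs, abs_of_pos ht, hnorm,
          mul_pow, pow_succ t n] at hB
        have htn : 0 < t ^ n := pow_pos ht n
        nlinarith [htn, hB]
      by_contra h
      have h' : 0 < ‖P z‖ := norm_pos_iff.mpr h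
      set ε := ‖P z‖ with hε
      have hzn : 0 < ‖z‖ ^ (n + 1) := by positivity
      set t := min (r0 / ‖z‖ / 2) (ε / (6 * C * ‖z‖ ^ (n + 1))) with htdef
      have hd1 : 0 < r0 / ‖z‖ / 2 := by positivity
      have hd2 : 0 < ε / (6 * C * ‖z‖ ^ (n + 1)) := by positivity
      have ht : 0 < t := lt_min hd1 hd2
      have htr : t < r0 / ‖z‖ := lt_of_le_of_lt (min_le_left _ _) (by linarith)
      have hk := key t ht htr
      have ht2 : t ≤ ε / (6 * C * ‖z‖ ^ (n + 1)) := min_le_right _ _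
      have h6 : t * (6 * C * ‖z‖ ^ (n + 1)) ≤ ε :=
        (le_div_iff₀ (by positivity)).mp ht2
      have hid : 3 * C * t * ‖z‖ ^ (n + 1) = t * (6 * C * ‖z‖ ^ (n + 1)) / 2 := by ring
      linarith [hk, h6, h']
  -- the one-variable polynomial vanishes on the unit circle
  set q : Polynomial ℂ := ∑ p ∈ Finset.range (n + 1), Polynomial.C (c p) * Polynomial.X ^ p
    with hq
  have hqroot : ∀ ζ : ℂ, ‖ζ‖ = 1 → q.IsRoot ζ := by
    intro ζ hζ
    obtain ⟨s, hs⟩ := IsAlgClosed.exists_pow_nat_eq ζ (two_pos)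
    have hsn : ‖s‖ = 1 := by
      have : ‖s‖ ^ 2 = 1 := by rw [← norm_pow, hs, hζ]
      nlinarith [norm_nonneg s, this]
    have hmc : s * (starRingEnd ℂ) s = 1 := by
      rw [Complex.mul_conj]
      norm_cast
      rw [Complex.normSq_eq_norm_sq]
      simp [hsn]
    have hterm : ∀ p ∈ Finset.range (n + 1),
        s ^ n * (c p * s ^ p * (starRingEnd ℂ s) ^ (n - p)) = c p * ζ ^ p := by
      intro p hp
      have hpn : p ≤ n := Nat.lt_succ_iff.mp (Finset.mem_range.mp hp)
      have hpow : s ^ n * s ^ p = (s ^ 2) ^ p * s ^ (n - p) := by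
        rw [← pow_mul, ← pow_add, ← pow_add]; congr 1; omega
      calc s ^ n * (c p * s ^ p * (starRingEnd ℂ s) ^ (n - p))
          = c p * (s ^ n * s ^ p) * (starRingEnd ℂ s) ^ (n - p) := by ring
        _ = c p * ((s ^ 2) ^ p * s ^ (n - p)) * (starRingEnd ℂ s) ^ (n - p) := by rw [hpow]
        _ = c p * (s ^ 2) ^ p * (s * (starRingEnd ℂ) s) ^ (n - p) := by
            rw [mul_pow]; ring
        _ = c p * ζ ^ p := by rw [hs, hmc, one_pow, mul_one]
    have heval : q.eval ζ = s ^ n * P s := by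
      rw [hq, hPdef]
      simp only [Polynomial.eval_finset_sum, Polynomial.eval_mul, Polynomial.eval_C,
        Polynomial.eval_pow, Polynomial.eval_X, Finset.mul_sum]
      exact (Finset.sum_congr rfl hterm).symm
    rw [Polynomial.IsRoot, heval, hPzero s, mul_zero]
  -- the unit circle is infinite, so q = 0
  have hq0 : q = 0 := by
    apply Polynomial.eq_zero_of_infinite_isRoot
    have key : ∀ x : ℝ, (↑(Circle.exp (Real.arctan x)) : ℂ).arg = Real.arctan x := fun x =>
      Circle.arg_exp (by linarith [Real.neg_pi_div_two_lt_arctan x, Real.pi_pos])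
        (by linarith [Real.arctan_lt_pi_div_two x, Real.pi_pos])
    refine Set.infinite_of_injective_forall_mem
      (f := fun k : ℕ => ((Circle.exp (Real.arctan k) : Circle) : ℂ)) ?_ ?_
    · intro a b hab
      have h2 : Real.arctan a = Real.arctan b := by
        rw [← key a, ← key b]; simp only at hab; rw [hab]
      exact_mod_cast Real.arctan_injective h2
    · intro k
      exact hqroot _ (by simpa using (Circle.exp (Real.arctan k)).norm_coe)
  -- extract coefficients
  intro p hp
  have hcoeff : q.coeff p = c p := by
    rw [hq]
    rw [Polynomial.finset_sum_coeff]
    simp only [Polynomial.coeff_C_mul, Polynomial.coeff_X_pow]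
    rw [Finset.sum_eq_single p]
    · simp
    · intro j _ hj
      simp [Ne.symm hj]
    · intro hnp
      exact absurd (Finset.mem_range.mpr (Nat.lt_succ_of_le hp)) hnp
  rw [← hcoeff, hq0, Polynomial.coeff_zero]
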